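/- arXiv:2312.01441 — 5 statements merged into one kernel-verified Lean document; each statement's English description precedes it below -/
import Mathlib

section
/- Let N ∈ ℕ, let P ∈ ℝ^{N×N} be symmetric positive definite, let ν > 0, let Q_z ∈ ℝ^{N×N} be symmetric negative definite, S_z ∈ ℝ^{N×1}, and R_z ∈ ℝ. Then the symmetric block matrix with block row/column sizes (N, 1, N, 1) given by [[P, P S_z, P, 0],[S_zᵀ P, ν R_z, 0, ν],[P, 0, −ν Q_z⁻¹, 0],[0, ν, 0, 1]] is positive semidefinite if and only if [[Q_z, S_z],[S_zᵀ, R_z]] − ν [[−P⁻¹, 0],[0, 1]] is positive semidefinite. -/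
open Matrix

set_option linter.unusedSectionVars false

variable {m n : Type*} [Fintype m] [Fintype n] [DecidableEq m] [DecidableEq n]

lemma posSemidef_smul_real {M : Matrix n n ℝ} (hM : M.PosSemidef) {c : ℝ} (hc : 0 ≤ c) :
    (c • M).PosSemidef := by
  refine posSemidef_iff_dotProduct_mulVec.mpr ⟨?_, fun x => ?_⟩
  · rw [IsHermitian, conjTranspose_smul, hM.1.eq, star_trivial]
  · rw [smul_mulVec, dotProduct_smul, smul_eq_mul]
    exact mul_nonneg hc (hM.dotProduct_mulVec_nonneg x)

lemma posSemidef_smul_iff_real {M : Matrix n n ℝ} {c : ℝ} (hc : 0 < c) :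
    (c • M).PosSemidef ↔ M.PosSemidef := by
  constructor
  · intro h
    have := posSemidef_smul_real h (c := c⁻¹) (by positivity)
    rwa [smul_smul, inv_mul_cancel₀ hc.ne', one_smul] at this
  · exact fun h => posSemidef_smul_real h hc.le

lemma posDef_smul_real {M : Matrix n n ℝ} (hM : M.PosDef) {c : ℝ} (hc : 0 < c) :
    (c • M).PosDef := by
  refine posDef_iff_dotProduct_mulVec.mpr ⟨?_, fun x hx => ?_⟩
  · rw [IsHermitian, conjTranspose_smul, hM.1.eq, star_trivial]
  · rw [smul_mulVec, dotProduct_smul, smul_eq_mul]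
    exact mul_pos hc (hM.dotProduct_mulVec_pos hx)

lemma posDef_fromBlocks_diag {A : Matrix m m ℝ} {B : Matrix n n ℝ}
    (hA : A.PosDef) (hB : B.PosDef) : (fromBlocks A 0 0 B).PosDef := by
  refine posDef_iff_dotProduct_mulVec.mpr ⟨?_, fun x hx => ?_⟩
  · rw [IsHermitian, fromBlocks_conjTranspose, hA.1.eq, hB.1.eq]
    simp
  · have hx' : x ∘ Sum.inl ≠ 0 ∨ x ∘ Sum.inr ≠ 0 := by
      by_contra h
      push_neg at h
      apply hx
      ext i
      cases i with
      | inl i => exact congrFun h.1 i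
      | inr i => exact congrFun h.2 i
    have hstar : star (x ∘ Sum.inl ⊕ᵥ x ∘ Sum.inr) = x ∘ Sum.inl ⊕ᵥ x ∘ Sum.inr := by
      ext i; simp
    have hs1 : star (x ∘ Sum.inl) = x ∘ Sum.inl := by ext i; simp
    have hs2 : star (x ∘ Sum.inr) = x ∘ Sum.inr := by ext i; simp
    rw [← Sum.elim_comp_inl_inr x, fromBlocks_mulVec]
    simp only [zero_mulVec, add_zero, zero_add, Sum.elim_comp_inl, Sum.elim_comp_inr]
    rw [hstar, sumElim_dotProduct_sumElim]
    rcases hx' with h | h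
    · refine add_pos_of_pos_of_nonneg ?_ ?_
      · have := hA.dotProduct_mulVec_pos h; rwa [hs1] at this
      · have := hB.posSemidef.dotProduct_mulVec_nonneg (x ∘ Sum.inr); rwa [hs2] at this
    · refine add_pos_of_nonneg_of_pos ?_ ?_
      · have := hA.posSemidef.dotProduct_mulVec_nonneg (x ∘ Sum.inl); rwa [hs1] at this
      · have := hB.dotProduct_mulVec_pos h; rwa [hs2] at this

lemma posSemidef_conj_iff {Y C : Matrix n n ℝ} (hC : IsUnit C.det) :
    (Cᴴ * Y * C).PosSemidef ↔ Y.PosSemidef := by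
  have hCH : IsUnit Cᴴ.det := by rwa [det_conjTranspose, star_trivial]
  constructor
  · intro h
    have h2 := h.conjTranspose_mul_mul_same C⁻¹
    have e : (C⁻¹)ᴴ * (Cᴴ * Y * C) * C⁻¹ = Y := by
      rw [conjTranspose_nonsing_inv, Matrix.mul_assoc Cᴴ Y C,
        Matrix.nonsing_inv_mul_cancel_left _ _ hCH,
        Matrix.mul_nonsing_inv_cancel_right _ _ hC]
    rwa [e] at h2
  · exact fun h => h.conjTranspose_mul_mul_same C


/-- Equivalence (via two Schur complements and a congruence with
`diag(ν P⁻¹, 1)`) between the invariance LMI and its condensed form. -/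
theorem invariance_LMI_equiv (N : ℕ)
    (P : Matrix (Fin N) (Fin N) ℝ) (hP : P.PosDef)
    (ν : ℝ) (hν : 0 < ν)
    (Qz : Matrix (Fin N) (Fin N) ℝ) (hQz : (-Qz).PosDef)
    (Sz : Matrix (Fin N) (Fin 1) ℝ) (Rz : ℝ) :
    (Matrix.fromBlocks
        (Matrix.fromBlocks P (P * Sz) (Sz.transpose * P)
          ((ν * Rz) • (1 : Matrix (Fin 1) (Fin 1) ℝ)))
        (Matrix.fromBlocks P 0 0 (ν • (1 : Matrix (Fin 1) (Fin 1) ℝ)))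
        (Matrix.fromBlocks P 0 0 (ν • (1 : Matrix (Fin 1) (Fin 1) ℝ)))
        (Matrix.fromBlocks (-(ν • Qz⁻¹)) 0 0 (1 : Matrix (Fin 1) (Fin 1) ℝ))).PosSemidef
      ↔ (Matrix.fromBlocks Qz Sz Sz.transpose (Rz • (1 : Matrix (Fin 1) (Fin 1) ℝ))
          - ν • Matrix.fromBlocks (-P⁻¹) 0 0 (1 : Matrix (Fin 1) (Fin 1) ℝ)).PosSemidef := by
  have hPdet : IsUnit P.det := hP.det_pos.ne'.isUnit
  have hQdet : IsUnit Qz.det := by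
    refine isUnit_iff_ne_zero.2 fun h => hQz.det_pos.ne' ?_
    rw [det_neg, h, mul_zero]
  -- abbreviations
  set A' : Matrix (Fin N ⊕ Fin 1) (Fin N ⊕ Fin 1) ℝ :=
    Matrix.fromBlocks P (P * Sz) (Sz.transpose * P) ((ν * Rz) • 1) with hA'
  set B' : Matrix (Fin N ⊕ Fin 1) (Fin N ⊕ Fin 1) ℝ :=
    Matrix.fromBlocks P 0 0 (ν • 1) with hB'
  set D' : Matrix (Fin N ⊕ Fin 1) (Fin N ⊕ Fin 1) ℝ :=
    Matrix.fromBlocks (-(ν • Qz⁻¹)) 0 0 1 with hD'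
  have hPT : Pᵀ = P := by
    rw [← conjTranspose_eq_transpose_of_trivial]; exact hP.1.eq
  have hB'H : B'ᴴ = B' := by
    rw [hB', fromBlocks_conjTranspose]
    simp [fromBlocks_inj, hPT, conjTranspose_eq_transpose_of_trivial]
  -- D' is positive definite
  have hnQinv : (-Qz⁻¹).PosDef := by
    have h1 : (-Qz)⁻¹ = -Qz⁻¹ := by
      apply inv_eq_right_inv
      rw [neg_mul_neg, Matrix.mul_nonsing_inv _ hQdet]
    have := hQz.inv
    rwa [h1] at this
  have hD : D'.PosDef := by
    rw [hD', show -(ν • Qz⁻¹) = ν • (-Qz⁻¹) by rw [smul_neg]]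
    exact posDef_fromBlocks_diag (posDef_smul_real hnQinv hν) Matrix.PosDef.one
  haveI : Invertible D' := D'.invertibleOfIsUnitDet hD.det_pos.ne'.isUnit
  -- Schur complement step
  rw [show (Matrix.fromBlocks A' B' B' D') = Matrix.fromBlocks A' B' B'ᴴ D' by rw [hB'H],
    Matrix.PosDef.fromBlocks₂₂ A' B' hD]
  -- compute D'⁻¹
  have hDinv : D'⁻¹ = Matrix.fromBlocks (-(ν⁻¹ • Qz)) 0 0 1 := by
    apply inv_eq_right_inv
    rw [hD', fromBlocks_multiply]
    simp only [Matrix.mul_zero, Matrix.zero_mul, Matrix.mul_one, Matrix.one_mul,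
      add_zero, zero_add, neg_mul_neg]
    rw [smul_mul_smul_comm, mul_inv_cancel₀ hν.ne', Matrix.nonsing_inv_mul _ hQdet, one_smul,
      fromBlocks_one]
  -- the Schur complement
  have hSchur : A' - B' * D'⁻¹ * B'ᴴ =
      Matrix.fromBlocks (P + ν⁻¹ • (P * Qz * P)) (P * Sz) (Sz.transpose * P)
        ((ν * Rz - ν * ν) • 1) := by
    rw [hB'H, hDinv, hA', hB', fromBlocks_multiply, fromBlocks_multiply]
    simp only [Matrix.mul_zero, Matrix.zero_mul, Matrix.mul_one, Matrix.one_mul,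
      add_zero, zero_add, Matrix.mul_neg, Matrix.neg_mul]
    rw [sub_eq_add_neg, fromBlocks_neg, fromBlocks_add, fromBlocks_inj]
    refine ⟨?_, by simp, by simp, ?_⟩
    · rw [neg_neg, Matrix.mul_smul, Matrix.smul_mul, Matrix.mul_assoc]
    · rw [smul_mul_smul_comm, Matrix.one_mul, sub_smul, sub_eq_add_neg]
  rw [hSchur]
  -- rewrite the RHS target matrix
  have hY : Matrix.fromBlocks Qz Sz Sz.transpose (Rz • (1 : Matrix (Fin 1) (Fin 1) ℝ))
          - ν • Matrix.fromBlocks (-P⁻¹) 0 0 1 =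
      Matrix.fromBlocks (Qz + ν • P⁻¹) Sz Sz.transpose ((Rz - ν) • 1) := by
    rw [fromBlocks_smul, sub_eq_add_neg, fromBlocks_neg, fromBlocks_add, fromBlocks_inj]
    refine ⟨by rw [smul_neg, neg_neg], by simp, by simp, by rw [sub_smul, sub_eq_add_neg]⟩
  rw [hY]
  -- congruence step
  set X : Matrix (Fin N ⊕ Fin 1) (Fin N ⊕ Fin 1) ℝ :=
    Matrix.fromBlocks (P + ν⁻¹ • (P * Qz * P)) (P * Sz) (Sz.transpose * P)
      ((ν * Rz - ν * ν) • 1) with hX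
  set Y : Matrix (Fin N ⊕ Fin 1) (Fin N ⊕ Fin 1) ℝ :=
    Matrix.fromBlocks (Qz + ν • P⁻¹) Sz Sz.transpose ((Rz - ν) • 1) with hYdef
  have hkey : ν • X = B'ᴴ * Y * B' := by
    rw [hB'H, hYdef, hB', fromBlocks_multiply, fromBlocks_multiply, hX, fromBlocks_smul]
    simp only [Matrix.mul_zero, Matrix.zero_mul, add_zero, zero_add]
    rw [fromBlocks_inj]
    refine ⟨?_, ?_, ?_, ?_⟩
    · rw [Matrix.mul_add, Matrix.add_mul, Matrix.mul_smul, Matrix.smul_mul,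
        Matrix.mul_nonsing_inv _ hPdet, Matrix.one_mul, smul_add, smul_smul,
        mul_inv_cancel₀ hν.ne', one_smul, add_comm]
    · rw [Matrix.mul_smul, Matrix.mul_one]
    · rw [Matrix.smul_mul, Matrix.smul_mul, Matrix.one_mul]
    · simp only [smul_mul_smul_comm, Matrix.one_mul, Matrix.mul_smul, Matrix.mul_one, smul_smul]
      congr 1
      ring
  have hCdet : IsUnit B'.det := by
    rw [hB', Matrix.det_fromBlocks_zero₂₁]
    simp only [Matrix.det_smul, Matrix.det_one, Fintype.card_fin, pow_one, mul_one]
    exact (mul_ne_zero hP.det_pos.ne' hν.ne').isUnit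
  rw [← posSemidef_smul_iff_real hν (M := X), hkey, posSemidef_conj_iff hCdet]
end

section
/- Let N ∈ ℕ, let P ∈ ℝ^{N×N} be symmetric positive definite, let ν > 0, let Q_z ∈ ℝ^{N×N} be symmetric negative definite, S_z ∈ ℝ^{N×1}, and R_z ∈ ℝ. If the symmetric block matrix with block row/column sizes (N, 1, N, 1) given by [[P, P S_z, P, 0],[S_zᵀ P, ν R_z, 0, ν],[P, 0, −ν Q_z⁻¹, 0],[0, ν, 0, 1]] is positive semidefinite, then every v ∈ ℝ^N with vᵀ P⁻¹ v ≤ 1 satisfies vᵀ Q_z v + 2 S_zᵀ v + R_z ≥ 0. -/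
open Matrix

/-- If the invariance LMI holds, then the ellipsoid
`{v : vᵀ P⁻¹ v ≤ 1}` is contained in the uncertainty region
`{v : vᵀ Q_z v + 2 S_zᵀ v + R_z ≥ 0}`. -/
theorem invariance_LMI_implies_inclusion (N : ℕ)
    (P : Matrix (Fin N) (Fin N) ℝ) (hP : P.PosDef)
    (ν : ℝ) (hν : 0 < ν)
    (Qz : Matrix (Fin N) (Fin N) ℝ) (hQz : (-Qz).PosDef)
    (Sz : Matrix (Fin N) (Fin 1) ℝ) (Rz : ℝ)
    (hLMI : (Matrix.fromBlocks
        (Matrix.fromBlocks P (P * Sz) (Sz.transpose * P)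
          ((ν * Rz) • (1 : Matrix (Fin 1) (Fin 1) ℝ)))
        (Matrix.fromBlocks P 0 0 (ν • (1 : Matrix (Fin 1) (Fin 1) ℝ)))
        (Matrix.fromBlocks P 0 0 (ν • (1 : Matrix (Fin 1) (Fin 1) ℝ)))
        (Matrix.fromBlocks (-(ν • Qz⁻¹)) 0 0 (1 : Matrix (Fin 1) (Fin 1) ℝ))).PosSemidef) :
    ∀ v : Fin N → ℝ, v ⬝ᵥ P⁻¹.mulVec v ≤ 1 →
      0 ≤ v ⬝ᵥ Qz.mulVec v + 2 * (v ⬝ᵥ fun i => Sz i 0) + Rz := by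
  intro v hv
  have hPdet : IsUnit P.det := isUnit_iff_ne_zero.mpr hP.det_pos.ne'
  have hQdet : IsUnit Qz.det := by
    have h := hQz.det_pos.ne'
    rw [Matrix.det_neg] at h
    exact isUnit_iff_ne_zero.mpr fun hz => h (by simp [hz])
  have hPP : P *ᵥ (P⁻¹ *ᵥ v) = v := by
    rw [Matrix.mulVec_mulVec, Matrix.mul_nonsing_inv _ hPdet, Matrix.one_mulVec]
  have hPsym : Pᵀ = P := hP.1
  set x : Fin N → ℝ := ν • (P⁻¹ *ᵥ v) with hx
  set y : Fin N → ℝ := Qz *ᵥ v with hy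
  have hQQ : Qz⁻¹ *ᵥ y = v := by
    rw [hy, Matrix.mulVec_mulVec, Matrix.nonsing_inv_mul _ hQdet, Matrix.one_mulVec]
  set t : Fin 1 → ℝ := fun _ => 1 with ht
  set s : Fin 1 → ℝ := fun _ => -ν with hs
  have hPx : P *ᵥ x = ν • v := by
    rw [hx, Matrix.mulVec_smul, hPP]
  have hSt : Sz *ᵥ t = fun i => Sz i 0 := by
    funext i; simp [Matrix.mulVec, dotProduct, ht]
  have hxP : ∀ w : Fin N → ℝ, x ⬝ᵥ P *ᵥ w = ν * (v ⬝ᵥ w) := by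
    intro w
    rw [Matrix.dotProduct_mulVec, ← Matrix.mulVec_transpose, hPsym, hPx,
      smul_dotProduct, smul_eq_mul]
  have h0 := hLMI.dotProduct_mulVec_nonneg (Sum.elim (Sum.elim x t) (Sum.elim y s))
  rw [show (star (Sum.elim (Sum.elim x t) (Sum.elim y s))) = Sum.elim (Sum.elim x t) (Sum.elim y s) from rfl] at h0
  rw [Matrix.fromBlocks_mulVec, Matrix.fromBlocks_mulVec, Matrix.fromBlocks_mulVec,
      Matrix.fromBlocks_mulVec, Matrix.fromBlocks_mulVec] at h0
  simp only [sumElim_dotProduct_sumElim, dotProduct_add,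
    Matrix.zero_mulVec, add_zero, zero_add, Matrix.add_mulVec,
    Sum.elim_comp_inl, Sum.elim_comp_inr] at h0
  have T1 : x ⬝ᵥ P *ᵥ x = ν * (ν * (v ⬝ᵥ P⁻¹ *ᵥ v)) := by
    rw [hxP, hx, dotProduct_smul, dotProduct_comm, smul_eq_mul]
  have T2 : x ⬝ᵥ (P * Sz) *ᵥ t = ν * (v ⬝ᵥ fun i => Sz i 0) := by
    rw [← Matrix.mulVec_mulVec, hSt, hxP]
  have T3 : t ⬝ᵥ (Szᵀ * P) *ᵥ x = ν * (v ⬝ᵥ fun i => Sz i 0) := by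
    rw [← Matrix.mulVec_mulVec, hPx, Matrix.dotProduct_mulVec, Matrix.vecMul_transpose,
      hSt, dotProduct_smul, dotProduct_comm, smul_eq_mul]
  have T4 : t ⬝ᵥ ((ν * Rz) • (1 : Matrix (Fin 1) (Fin 1) ℝ)) *ᵥ t = ν * Rz := by
    simp [Matrix.smul_mulVec, Matrix.one_mulVec, dotProduct, ht,
      Fin.sum_univ_one]
  have T5 : x ⬝ᵥ P *ᵥ y = ν * (v ⬝ᵥ y) := hxP y
  have T6 : t ⬝ᵥ (ν • (1 : Matrix (Fin 1) (Fin 1) ℝ)) *ᵥ s = -(ν * ν) := by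
    simp [Matrix.smul_mulVec, Matrix.one_mulVec, dotProduct, ht, hs,
      Fin.sum_univ_one]
  have T7 : y ⬝ᵥ P *ᵥ x = ν * (v ⬝ᵥ y) := by
    rw [hPx, dotProduct_smul, dotProduct_comm, smul_eq_mul]
  have T8 : s ⬝ᵥ (ν • (1 : Matrix (Fin 1) (Fin 1) ℝ)) *ᵥ t = -(ν * ν) := by
    simp [Matrix.smul_mulVec, Matrix.one_mulVec, dotProduct, ht, hs,
      Fin.sum_univ_one]
  have T9 : y ⬝ᵥ (-(ν • Qz⁻¹)) *ᵥ y = -(ν * (v ⬝ᵥ y)) := by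
    rw [Matrix.neg_mulVec, dotProduct_neg, Matrix.smul_mulVec, hQQ,
      dotProduct_smul, dotProduct_comm, smul_eq_mul]
  have T10 : s ⬝ᵥ (1 : Matrix (Fin 1) (Fin 1) ℝ) *ᵥ s = ν * ν := by
    simp [Matrix.one_mulVec, dotProduct, hs, Fin.sum_univ_one]
  rw [T1, T2, T3, T4, T5, T6, T7, T8, T9, T10] at h0
  -- h0 : 0 ≤ ν²*(v⬝P⁻¹v) - ν² + ν*((v⬝y) + 2c + Rz)
  nlinarith [mul_pos hν hν, mul_le_mul_of_nonneg_left hv (le_of_lt (mul_pos hν hν))]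
end

section
/- Let N, m ∈ ℕ, δ ∈ ℝ^N, let Λ̃ ∈ ℝ^{m×m} be symmetric, Q ∈ ℝ^{N×N} symmetric, S ∈ ℝ^{N×1}, and R ∈ ℝ. Then, with Δ := I_m ⊗ δ ∈ ℝ^{Nm×m}, the matrix identity [Δ; I_m]ᵀ · [[Λ̃ ⊗ Q, Λ̃ ⊗ S],[Λ̃ ⊗ Sᵀ, Λ̃ ⊗ R]] · [Δ; I_m] = (δᵀ Q δ + 2 Sᵀ δ + R) · Λ̃ holds, where [Δ; I_m] denotes the (Nm+m)×m matrix obtained by stacking Δ on top of I_m. Consequently, if Λ̃ is positive semidefinite and δᵀ Q δ + 2 Sᵀ δ + R ≥ 0, then [Δ; I_m]ᵀ [[Λ̃ ⊗ Q, Λ̃ ⊗ S],[Λ̃ ⊗ Sᵀ, Λ̃ ⊗ R]] [Δ; I_m] is positive semidefinite. -/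
open Matrix
open scoped Kronecker

/-- The Kronecker product `Λ ⊗ v` of an `m × m` matrix with a column vector `v ∈ ℝ^N`. -/
def kronCol {m N : ℕ} (Λ : Matrix (Fin m) (Fin m) ℝ) (v : Fin N → ℝ) :
    Matrix (Fin m × Fin N) (Fin m) ℝ :=
  Matrix.of fun p j => Λ p.1 j * v p.2

/-- The Kronecker product `Λ ⊗ vᵀ` of an `m × m` matrix with a row vector `vᵀ`. -/
def kronRow {m N : ℕ} (Λ : Matrix (Fin m) (Fin m) ℝ) (v : Fin N → ℝ) :
    Matrix (Fin m) (Fin m × Fin N) ℝ :=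
  Matrix.of fun i p => Λ i p.1 * v p.2

/-- The structured uncertainty `Δ = I_m ⊗ δ` satisfies the quadratic
multiplier identity `[Δ; I]ᵀ [[Λ̃⊗Q, Λ̃⊗S],[Λ̃⊗Sᵀ, Λ̃⊗R]] [Δ; I] = (δᵀQδ + 2Sᵀδ + R) Λ̃`; in
particular, if `Λ̃ ⪰ 0` and `δᵀQδ + 2Sᵀδ + R ≥ 0`, the left-hand side is positive
semidefinite. -/
theorem structured_multiplier_identity (N m : ℕ) (δ : Fin N → ℝ)
    (Λ : Matrix (Fin m) (Fin m) ℝ) (hΛ : Λ.IsSymm)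
    (Q : Matrix (Fin N) (Fin N) ℝ) (hQ : Q.IsSymm)
    (S : Fin N → ℝ) (R : ℝ) :
    (Matrix.fromRows (kronCol (1 : Matrix (Fin m) (Fin m) ℝ) δ)
        (1 : Matrix (Fin m) (Fin m) ℝ)).transpose
      * Matrix.fromBlocks (Λ ⊗ₖ Q) (kronCol Λ S) (kronRow Λ S) (R • Λ)
      * Matrix.fromRows (kronCol (1 : Matrix (Fin m) (Fin m) ℝ) δ)
          (1 : Matrix (Fin m) (Fin m) ℝ)
      = (δ ⬝ᵥ Q.mulVec δ + 2 * (S ⬝ᵥ δ) + R) • Λ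
    ∧ (Λ.PosSemidef → 0 ≤ δ ⬝ᵥ Q.mulVec δ + 2 * (S ⬝ᵥ δ) + R →
        ((Matrix.fromRows (kronCol (1 : Matrix (Fin m) (Fin m) ℝ) δ)
            (1 : Matrix (Fin m) (Fin m) ℝ)).transpose
          * Matrix.fromBlocks (Λ ⊗ₖ Q) (kronCol Λ S) (kronRow Λ S) (R • Λ)
          * Matrix.fromRows (kronCol (1 : Matrix (Fin m) (Fin m) ℝ) δ)
              (1 : Matrix (Fin m) (Fin m) ℝ)).PosSemidef) := by
  have key : (Matrix.fromRows (kronCol (1 : Matrix (Fin m) (Fin m) ℝ) δ)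
        (1 : Matrix (Fin m) (Fin m) ℝ)).transpose
      * Matrix.fromBlocks (Λ ⊗ₖ Q) (kronCol Λ S) (kronRow Λ S) (R • Λ)
      * Matrix.fromRows (kronCol (1 : Matrix (Fin m) (Fin m) ℝ) δ)
          (1 : Matrix (Fin m) (Fin m) ℝ)
      = (δ ⬝ᵥ Q.mulVec δ + 2 * (S ⬝ᵥ δ) + R) • Λ := by
    rw [transpose_fromRows, Matrix.mul_assoc, fromBlocks_mul_fromRows,
      fromCols_mul_fromRows]
    ext i j
    simp [Matrix.mul_apply, Matrix.add_mul, kronCol, kronRow, Fintype.sum_prod_type,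
      Matrix.one_apply, dotProduct, mulVec, Finset.mul_sum, Finset.sum_mul, ite_mul, mul_ite,
      Finset.sum_ite_eq, Finset.sum_ite_eq', mul_comm, mul_left_comm]
    have pull : ∀ (f g : Fin N → ℝ) (c : ℝ), ∑ x, f x * c * g x = c * ∑ x, f x * g x := by
      intro f g c; rw [Finset.mul_sum]; exact Finset.sum_congr rfl fun y _ => by ring
    have pull2 : ∀ (f g : Fin N → ℝ) (c : ℝ), ∑ x, f x * (c * g x) = c * ∑ x, f x * g x := by
      intro f g c; rw [Finset.mul_sum]; exact Finset.sum_congr rfl fun y _ => by ring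
    have e2 : ∑ x, δ x * (Λ i j * S x) = Λ i j * ∑ x, δ x * S x := pull2 δ S (Λ i j)
    have e1 : ∑ x, δ x * (∑ x1, δ x1 * (Λ i j * Q x x1) + Λ i j * S x)
        = Λ i j * ∑ x, ∑ x1, δ x * (δ x1 * Q x x1) + Λ i j * ∑ x, δ x * S x := by
      rw [Finset.mul_sum, Finset.mul_sum, ← Finset.sum_add_distrib]
      refine Finset.sum_congr rfl fun x _ => ?_
      rw [mul_add, Finset.mul_sum, Finset.mul_sum]
      congr 1
      · exact Finset.sum_congr rfl fun y _ => by ring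
      · ring
    rw [e1, e2]
    rw [show ∑ x, δ x * S x * 2 = (∑ x, δ x * S x) * 2 from (Finset.sum_mul _ _ _).symm]
    ring
  refine ⟨key, fun hP hc => ?_⟩
  rw [key]
  constructor
  · rw [Matrix.IsHermitian]
    rw [Matrix.conjTranspose_smul]
    simp [hΛ.eq]
  · intro x
    have h := mul_nonneg hc (hP.2 x)
    simp only [Finsupp.sum, Finset.mul_sum, Matrix.smul_apply, smul_eq_mul] at h ⊢
    exact le_of_le_of_eq h (Finset.sum_congr rfl fun i _ => Finset.sum_congr rfl fun j _ => by ring)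
end

section
/- Let ρ, λ ∈ ℝ with λ ≠ 2ρ. Let x₁, x₂ : ℝ → ℝ be differentiable and u : ℝ → ℝ be such that for all t ∈ ℝ: x₁'(t) = ρ x₁(t) and x₂'(t) = λ (x₂(t) − x₁(t)²) + u(t). Define z₁(t) := x₁(t), z₂(t) := x₂(t), and z₃(t) := x₂(t) − (λ/(λ − 2ρ)) x₁(t)². Then for all t ∈ ℝ: z₁'(t) = ρ z₁(t), z₂'(t) = 2ρ z₂(t) + (λ − 2ρ) z₃(t) + u(t), and z₃'(t) = λ z₃(t) + u(t). -/
/-- Exact finite-dimensional linear lifted representation of the system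
`ẋ₁ = ρ x₁`, `ẋ₂ = λ(x₂ − x₁²) + u` under the Koopman lifting
`z = (x₁, x₂, x₂ − (λ/(λ−2ρ)) x₁²)`:
the lifted state satisfies `ż₁ = ρ z₁`, `ż₂ = 2ρ z₂ + (λ−2ρ) z₃ + u`, `ż₃ = λ z₃ + u`. -/
theorem koopman_lifting_exact (ρ lam : ℝ) (hlam : lam ≠ 2 * ρ)
    (x₁ x₂ u : ℝ → ℝ)
    (h1 : ∀ t, HasDerivAt x₁ (ρ * x₁ t) t)
    (h2 : ∀ t, HasDerivAt x₂ (lam * (x₂ t - (x₁ t) ^ 2) + u t) t)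
    (z₁ z₂ z₃ : ℝ → ℝ)
    (hz₁ : z₁ = fun t => x₁ t)
    (hz₂ : z₂ = fun t => x₂ t)
    (hz₃ : z₃ = fun t => x₂ t - lam / (lam - 2 * ρ) * (x₁ t) ^ 2) :
    ∀ t : ℝ,
      HasDerivAt z₁ (ρ * z₁ t) t ∧
      HasDerivAt z₂ (2 * ρ * z₂ t + (lam - 2 * ρ) * z₃ t + u t) t ∧
      HasDerivAt z₃ (lam * z₃ t + u t) t := by
  subst hz₁ hz₂ hz₃
  intro t
  have hsub : lam - 2 * ρ ≠ 0 := sub_ne_zero.mpr hlam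
  refine ⟨h1 t, ?_, ?_⟩
  · have := h2 t
    convert this using 1
    field_simp
    ring
  · have hsq : HasDerivAt (fun t => lam / (lam - 2 * ρ) * (x₁ t) ^ 2)
        (lam / (lam - 2 * ρ) * (2 * x₁ t * (ρ * x₁ t))) t := by
      exact (((h1 t).pow 2).const_mul _).congr_deriv (by ring)
    refine ((h2 t).sub hsq).congr_deriv ?_
    field_simp
    ring
end

section
/- Let N, m ∈ ℕ, L ∈ ℝ^{m×N}, L_w ∈ ℝ^{m×Nm}, let Λ ∈ ℝ^{m×m} be invertible, let P ∈ ℝ^{N×N} be invertible, and let v ∈ ℝ^N be such that I_m − L_w (Λ⁻¹ ⊗ v) ∈ ℝ^{m×m} is invertible (where Λ⁻¹ ⊗ v ∈ ℝ^{Nm×m} is the Kronecker product of Λ⁻¹ with the column vector v). Define K := L P⁻¹ and K_w := L_w (Λ⁻¹ ⊗ I_N). Then u := (I_m − L_w(Λ⁻¹ ⊗ v))⁻¹ L P⁻¹ v is the unique solution of the implicit feedback equation u = K v + K_w (I_m ⊗ v) u. -/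
open Matrix
open scoped Kronecker

lemma kron_mul_kronCol {m N : ℕ} (A : Matrix (Fin m) (Fin m) ℝ) (v : Fin N → ℝ) :
    @HMul.hMul _ _ _ Matrix.instHMulOfFintypeOfMulOfAddCommMonoid
      (A ⊗ₖ (1 : Matrix (Fin N) (Fin N) ℝ)) (kronCol 1 v) = kronCol A v := by
  ext p j
  simp only [Matrix.mul_apply, Matrix.kroneckerMap_apply, kronCol, Matrix.of_apply]
  rw [Fintype.sum_prod_type]
  simp [Matrix.one_apply, Finset.sum_ite_eq', Finset.mul_sum, mul_comm, mul_assoc,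
    mul_left_comm]

/-- The explicit nonlinear feedback
`u = (I_m − L_w(Λ⁻¹ ⊗ v))⁻¹ L P⁻¹ v` is the unique solution of the implicit gain-scheduled
feedback equation `u = K v + K_w (I_m ⊗ v) u` with `K = L P⁻¹` and `K_w = L_w (Λ⁻¹ ⊗ I_N)`. -/
theorem explicit_feedback_unique_solution (N m : ℕ)
    (L : Matrix (Fin m) (Fin N) ℝ) (Lw : Matrix (Fin m) (Fin m × Fin N) ℝ)
    (Λ : Matrix (Fin m) (Fin m) ℝ) (hΛ : IsUnit Λ.det)
    (P : Matrix (Fin N) (Fin N) ℝ) (hP : IsUnit P.det)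
    (v : Fin N → ℝ)
    (hinv : IsUnit ((1 : Matrix (Fin m) (Fin m) ℝ) - Lw * kronCol Λ⁻¹ v).det) :
    (((1 : Matrix (Fin m) (Fin m) ℝ) - Lw * kronCol Λ⁻¹ v)⁻¹ * (L * P⁻¹)).mulVec v
      = (L * P⁻¹).mulVec v
        + (Lw * (Λ⁻¹ ⊗ₖ (1 : Matrix (Fin N) (Fin N) ℝ))).mulVec
            ((kronCol (1 : Matrix (Fin m) (Fin m) ℝ) v).mulVec
              ((((1 : Matrix (Fin m) (Fin m) ℝ) - Lw * kronCol Λ⁻¹ v)⁻¹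
                * (L * P⁻¹)).mulVec v))
    ∧ ∀ u' : Fin m → ℝ,
        u' = (L * P⁻¹).mulVec v
          + (Lw * (Λ⁻¹ ⊗ₖ (1 : Matrix (Fin N) (Fin N) ℝ))).mulVec
              ((kronCol (1 : Matrix (Fin m) (Fin m) ℝ) v).mulVec u') →
        u' = (((1 : Matrix (Fin m) (Fin m) ℝ) - Lw * kronCol Λ⁻¹ v)⁻¹
          * (L * P⁻¹)).mulVec v := by
  set M : Matrix (Fin m) (Fin m) ℝ := Lw * kronCol Λ⁻¹ v with hM
  set K : Matrix (Fin m) (Fin N) ℝ := L * P⁻¹ with hK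
  have hcomb : ∀ u : Fin m → ℝ,
      (Lw * (Λ⁻¹ ⊗ₖ (1 : Matrix (Fin N) (Fin N) ℝ))).mulVec
        ((kronCol (1 : Matrix (Fin m) (Fin m) ℝ) v).mulVec u) = M.mulVec u := by
    intro u
    rw [Matrix.mulVec_mulVec, Matrix.mul_assoc, kron_mul_kronCol]
  have hIM : ((1 : Matrix (Fin m) (Fin m) ℝ) - M) * ((1 - M)⁻¹) = 1 :=
    Matrix.mul_nonsing_inv _ hinv
  have hIM' : ((1 - M)⁻¹) * ((1 : Matrix (Fin m) (Fin m) ℝ) - M) = 1 :=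
    Matrix.nonsing_inv_mul _ hinv
  constructor
  · rw [hcomb]
    have h1 : ((1 : Matrix (Fin m) (Fin m) ℝ) - M).mulVec
        (((1 - M)⁻¹ * K).mulVec v) = K.mulVec v := by
      rw [Matrix.mulVec_mulVec, ← Matrix.mul_assoc, hIM, Matrix.one_mul]
    have h2 := h1
    rw [Matrix.sub_mulVec, Matrix.one_mulVec, sub_eq_iff_eq_add] at h2
    exact h2
  · intro u' hu'
    rw [hcomb] at hu'
    have h3 : ((1 : Matrix (Fin m) (Fin m) ℝ) - M).mulVec u' = K.mulVec v := by
      rw [Matrix.sub_mulVec, Matrix.one_mulVec, sub_eq_iff_eq_add]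
      exact hu'
    have := congrArg (fun w => ((1 - M)⁻¹).mulVec w) h3
    simpa [Matrix.mulVec_mulVec, hIM', Matrix.one_mulVec] using this
end
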